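/- (Hausdorff) Every linear order L is a dense sum of scattered linear orders: there exists a dense linear order L* and an assignment i ↦ h(i) of scattered linear orders to elements of L* such that L is order-isomorphic to the ordered sum Σ_{i ∈ L*} h(i). -/

import Mathlib

universe u

open Set

namespace H9

variable {L : Type u} [LinearOrder L]

/-- A set is scattered iff no copy of `ℚ` embeds into it. -/
def Scat (s : Set L) : Prop := ¬ ∃ g : ℚ → s, StrictMono g

lemma scat_mono {s t : Set L} (h : s ⊆ t) (ht : Scat t) : Scat s := by
  rintro ⟨g, hg⟩
  exact ht ⟨fun q => ⟨(g q : L), h (g q).2⟩,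
    fun a b hab => Subtype.mk_lt_mk.2 (Subtype.coe_lt_coe.2 (hg hab))⟩

lemma scat_subsingleton {s : Set L} (h : s.Subsingleton) : Scat s := by
  rintro ⟨g, hg⟩
  have h01 : (g 0 : L) < (g 1 : L) := Subtype.coe_lt_coe.2 (hg (by norm_num))
  exact absurd (h (g 0).2 (g 1).2) (ne_of_lt h01)

lemma phi_strictMono : StrictMono (fun q : ℚ => q / (1 + |q|)) := by
  intro a b hab
  have ha : (0:ℚ) < 1 + |a| := by positivity
  have hb : (0:ℚ) < 1 + |b| := by positivity
  dsimp only
  rw [div_lt_div_iff₀ ha hb]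
  rcases abs_cases a with ⟨h1, _⟩ | ⟨h1, _⟩ <;> rcases abs_cases b with ⟨h2, _⟩ | ⟨h2, _⟩ <;>
    rw [h1, h2] <;> nlinarith

lemma phi_mem (q : ℚ) : q / (1 + |q|) ∈ Set.Ioo (-1 : ℚ) 1 := by
  have h : (0:ℚ) < 1 + |q| := by positivity
  have h1 := neg_abs_le q
  have h2 := le_abs_self q
  constructor
  · rw [lt_div_iff₀ h]; nlinarith
  · rw [div_lt_one h]; linarith

/-- A copy of `ℚ` fits inside any rational interval. -/
lemma embed_Ioo (a b : ℚ) (h : a < b) :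
    ∃ f : ℚ → ℚ, StrictMono f ∧ ∀ q, f q ∈ Set.Ioo a b := by
  refine ⟨fun q => a + (b - a) * (q / (1 + |q|) + 1) / 2, ?_, ?_⟩
  · intro x y hxy
    have hφ : x / (1 + |x|) < y / (1 + |y|) := phi_strictMono hxy
    dsimp only
    nlinarith
  · intro q
    obtain ⟨h1, h2⟩ := phi_mem q
    constructor <;> dsimp only <;> nlinarith

/-- A union of two scattered sets, one entirely below the other, is scattered. -/
lemma scat_union {s t : Set L} (hst : ∀ a ∈ s, ∀ b ∈ t, a ≤ b)
    (hs : Scat s) (ht : Scat t) : Scat (s ∪ t) := by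
  rintro ⟨g, hg⟩
  by_cases hD : ∃ q0 : ℚ, (g q0 : L) ∈ s
  · obtain ⟨q0, hq0⟩ := hD
    obtain ⟨f, hf, hfm⟩ := embed_Ioo (q0 - 1) q0 (by linarith)
    refine hs ⟨fun q => ⟨(g (f q) : L), ?_⟩, fun x y hxy =>
      Subtype.mk_lt_mk.2 (Subtype.coe_lt_coe.2 (hg (hf hxy)))⟩
    rcases (g (f q)).2 with h | h
    · exact h
    · exact absurd (hst _ hq0 _ h)
        (not_le.2 (Subtype.coe_lt_coe.2 (hg (hfm q).2)))
  · push_neg at hD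
    refine ht ⟨fun q => ⟨(g q : L), ?_⟩, fun x y hxy =>
      Subtype.mk_lt_mk.2 (Subtype.coe_lt_coe.2 (hg hxy))⟩
    rcases (g q).2 with h | h
    · exact absurd h (hD q)
    · exact h

/-- If every pair of points of `s` spans a scattered interval, `s` is scattered. -/
lemma scat_of_pairwise {s : Set L}
    (h : ∀ a ∈ s, ∀ b ∈ s, a < b → Scat (Set.Icc a b)) : Scat s := by
  rintro ⟨g, hg⟩
  have h01 : (g 0 : L) < (g 1 : L) := Subtype.coe_lt_coe.2 (hg (by norm_num))
  obtain ⟨f, hf, hfm⟩ := embed_Ioo 0 1 one_pos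
  exact h _ (g 0).2 _ (g 1).2 h01 ⟨fun q => ⟨(g (f q) : L),
      ⟨le_of_lt (Subtype.coe_lt_coe.2 (hg (hfm q).1)),
       le_of_lt (Subtype.coe_lt_coe.2 (hg (hfm q).2))⟩⟩,
    fun x y hxy => Subtype.mk_lt_mk.2 (Subtype.coe_lt_coe.2 (hg (hf hxy)))⟩

/-- Hausdorff's equivalence relation: the interval between `x` and `y` is scattered. -/
def rel (x y : L) : Prop := Scat (Set.uIcc x y)

lemma rel_refl (x : L) : rel x x := by
  apply scat_subsingleton
  rw [Set.uIcc_self]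
  exact Set.subsingleton_singleton

lemma rel_symm {x y : L} (h : rel x y) : rel y x := by
  unfold rel at *
  rwa [Set.uIcc_comm]

lemma scat_pivot {s t : Set L} (y : L) (hs : Scat s) (ht : Scat t) :
    Scat ((s ∩ Iic y) ∪ (t ∩ Ici y)) :=
  scat_union (fun _ ha _ hb => le_trans ha.2 hb.2)
    (scat_mono inter_subset_left hs) (scat_mono inter_subset_left ht)

lemma rel_trans_aux {x y z : L} (h1 : rel x y) (h2 : rel y z) (hxz : x ≤ z) : rel x z := by
  unfold rel at *
  rw [Set.uIcc_of_le hxz]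
  rcases le_total y x with hyx | hxy
  · exact scat_mono (by rw [Set.uIcc_of_le (hyx.trans hxz)]; exact Icc_subset_Icc hyx le_rfl) h2
  · rcases le_total z y with hzy | hyz
    · exact scat_mono (by rw [Set.uIcc_of_le hxy]; exact Icc_subset_Icc le_rfl hzy) h1
    · apply scat_mono ?_ (scat_pivot y h1 h2)
      intro w hw
      rcases le_total w y with h | h
      · exact Or.inl ⟨mem_uIcc_of_le hw.1 h, h⟩
      · exact Or.inr ⟨mem_uIcc_of_le h hw.2, h⟩

lemma rel_trans {x y z : L} (h1 : rel x y) (h2 : rel y z) : rel x z := by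
  rcases le_total x z with h | h
  · exact rel_trans_aux h1 h2 h
  · exact rel_symm (rel_trans_aux (rel_symm h2) (rel_symm h1) h)

def relSetoid (L : Type u) [LinearOrder L] : Setoid L :=
  ⟨rel, ⟨rel_refl, fun h => rel_symm h, fun h1 h2 => rel_trans h1 h2⟩⟩

lemma qle_dir {x y x' y' : L} (hx : rel x x') (hy : rel y y')
    (h : x ≤ y ∨ rel x y) : x' ≤ y' ∨ rel x' y' := by
  rcases h with h | h
  · by_cases hxy' : x' ≤ y'
    · exact Or.inl hxy'
    · push_neg at hxy'
      right
      unfold rel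
      rw [Set.uIcc_comm, Set.uIcc_of_le hxy'.le]
      apply scat_mono ?_ (scat_pivot y hy hx)
      intro w hw
      rcases le_total w y with hc | hc
      · refine Or.inl ⟨?_, hc⟩
        rw [Set.mem_uIcc]
        right; exact ⟨hw.1, hc⟩
      · refine Or.inr ⟨?_, hc⟩
        rw [Set.mem_uIcc]
        left; exact ⟨h.trans hc, hw.2⟩
  · exact Or.inr (rel_trans (rel_trans (rel_symm hx) h) hy)

def qle : Quotient (relSetoid L) → Quotient (relSetoid L) → Prop :=
  Quotient.lift₂ (fun x y => x ≤ y ∨ rel x y)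
    (fun _ _ _ _ hx hy => propext ⟨qle_dir hx hy, qle_dir (rel_symm hx) (rel_symm hy)⟩)

noncomputable def qLinearOrder : LinearOrder (Quotient (relSetoid L)) where
  le := qle
  lt a b := qle a b ∧ ¬ qle b a
  lt_iff_le_not_ge _ _ := Iff.rfl
  le_refl a := Quotient.inductionOn a fun _ => Or.inl le_rfl
  le_trans a b c := Quotient.inductionOn₃ a b c fun x y z h1 h2 => by
    rcases h1 with h1 | h1 <;> rcases h2 with h2 | h2
    · exact Or.inl (h1.trans h2)
    · rcases le_total x z with h | h
      · exact Or.inl h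
      · refine Or.inr (scat_mono ?_ h2)
        rw [Set.uIcc_comm x z, Set.uIcc_of_le h, Set.uIcc_comm y z, Set.uIcc_of_le (h.trans h1)]
        exact Icc_subset_Icc le_rfl h1
    · rcases le_total x z with h | h
      · exact Or.inl h
      · refine Or.inr (scat_mono ?_ h1)
        rw [Set.uIcc_comm x z, Set.uIcc_of_le h, Set.uIcc_comm x y, Set.uIcc_of_le (h2.trans h)]
        exact Icc_subset_Icc h2 le_rfl
    · exact Or.inr (rel_trans h1 h2)
  le_antisymm a b := Quotient.inductionOn₂ a b fun x y h1 h2 => by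
    apply Quotient.sound
    rcases h1 with h1 | h1
    · rcases h2 with h2 | h2
      · exact le_antisymm h1 h2 ▸ rel_refl x
      · exact rel_symm h2
    · exact h1
  le_total a b := Quotient.inductionOn₂ a b fun x y => by
    rcases le_total x y with h | h
    · exact Or.inl (Or.inl h)
    · exact Or.inr (Or.inl h)
  toDecidableLE := Classical.decRel _

lemma qle_mk {x y : L} :
    (qLinearOrder.le (Quotient.mk (relSetoid L) x) (Quotient.mk (relSetoid L) y)) ↔
      (x ≤ y ∨ rel x y) := Iff.rfl

attribute [-instance] Quotient.instLE_mathlib Quotient.instPreorder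

lemma qdense : @DenselyOrdered (Quotient (relSetoid L)) (qLinearOrder).toLT := by
  letI := qLinearOrder (L := L)
  refine @DenselyOrdered.mk _ (qLinearOrder (L := L)).toLT ?_
  intro a b hab
  induction a using Quotient.inductionOn with | h x => ?_
  induction b using Quotient.inductionOn with | h y => ?_
  have hle : x ≤ y ∨ rel x y := qle_mk.1 hab.le
  have hnot : ¬ (y ≤ x ∨ rel y x) := fun h => absurd (qle_mk.2 h) (not_le_of_gt hab)
  push_neg at hnot
  obtain ⟨hxy, hryx⟩ := hnot
  have hrxy : ¬ rel x y := fun h => hryx (rel_symm h)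
  by_contra hc
  push_neg at hc
  apply hrxy
  unfold rel
  rw [Set.uIcc_of_le hxy.le]
  have key : ∀ z ∈ Icc x y, rel x z ∨ rel z y := by
    intro z hz
    have h1 : Quotient.mk (relSetoid L) x ≤ Quotient.mk (relSetoid L) z := qle_mk.2 (Or.inl hz.1)
    have h2 : Quotient.mk (relSetoid L) z ≤ Quotient.mk (relSetoid L) y := qle_mk.2 (Or.inl hz.2)
    rcases lt_or_eq_of_le h1 with h | h
    · right
      have h3 := hc (Quotient.mk (relSetoid L) z) h
      rcases qle_mk.1 h3 with h4 | h4
      · rcases qle_mk.1 h2 with h5 | h5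
        · exact (le_antisymm h5 h4) ▸ rel_refl y
        · exact h5
      · exact rel_symm h4
    · exact Or.inl (Quotient.exact h)
  have hsub : Icc x y ⊆ {z | z ∈ Icc x y ∧ rel x z} ∪ {z | z ∈ Icc x y ∧ rel z y} := by
    intro z hz
    rcases key z hz with h | h
    · exact Or.inl ⟨hz, h⟩
    · exact Or.inr ⟨hz, h⟩
  apply scat_mono hsub
  apply scat_union
  · rintro p ⟨hp, hrp⟩ q ⟨hq, hrq⟩
    by_contra hpq
    push_neg at hpq
    apply hrxy
    refine rel_trans ?_ hrq
    unfold rel at hrp ⊢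
    rw [Set.uIcc_of_le hq.1]
    rw [Set.uIcc_of_le hp.1] at hrp
    exact scat_mono (Icc_subset_Icc le_rfl hpq.le) hrp
  · apply scat_of_pairwise
    rintro p ⟨hp, _⟩ q ⟨hq, hrq⟩ _
    unfold rel at hrq
    rw [Set.uIcc_of_le hq.1] at hrq
    exact scat_mono (Icc_subset_Icc hp.1 le_rfl) hrq
  · apply scat_of_pairwise
    rintro p ⟨hp, hrp⟩ q ⟨hq, _⟩ _
    unfold rel at hrp
    rw [Set.uIcc_of_le hp.2] at hrp
    exact scat_mono (Icc_subset_Icc le_rfl hq.2) hrp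

end H9

/-- Hausdorff: every linear order is a dense sum of scattered linear orders.
Formally: there is a dense linear order `I` and a monotone surjection `p : L → I`
whose fibers (the summands, so that `L = Σ_{i ∈ I} p⁻¹(i)` as an ordered sum)
are all scattered (contain no copy of `ℚ`). -/
theorem stmt9 (L : Type u) [LinearOrder L] :
    ∃ (I : Type u) (instI : LinearOrder I),
      @DenselyOrdered I instI.toLT ∧
      ∃ p : L → I,
        @Monotone L I _ instI.toPreorder p ∧
        Function.Surjective p ∧
        ∀ i : I, ¬ ∃ g : ℚ → {x : L // p x = i}, StrictMono g := by
  classical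
  refine ⟨Quotient (H9.relSetoid L), H9.qLinearOrder, H9.qdense,
    Quotient.mk (H9.relSetoid L), ?_, ?_, ?_⟩
  · intro x y h
    exact Or.inl h
  · intro i
    exact Quotient.inductionOn i fun x => ⟨x, rfl⟩
  · rintro i ⟨g, hg⟩
    have hfib : H9.Scat {z : L | Quotient.mk (H9.relSetoid L) z = i} := by
      apply H9.scat_of_pairwise
      intro a ha b hb hab
      have hr : H9.rel a b := Quotient.exact (ha.trans hb.symm)
      unfold H9.rel at hr
      rwa [Set.uIcc_of_le hab.le] at hr
    exact hfib ⟨fun q => ⟨(g q).1, (g q).2⟩,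
      fun p q hpq => Subtype.mk_lt_mk.2 (Subtype.coe_lt_coe.2 (hg hpq))⟩
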